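/- For nonnegative integers a, b, x, y: ∑_{k=0}^{min(a,b)} q^{(a-k)(b-k)} · C_q(x+y+k, k) · C_q(y, a−k) · C_q(x, b−k) = C_q(x+a, b) · C_q(y+b, a). -/

import Mathlib

open Finset

noncomputable def qPoch (q a : RatFunc ℚ) (n : ℕ) : RatFunc ℚ :=
  ∏ j ∈ Finset.range n, (1 - a * q ^ j)

noncomputable def qBinom (q : RatFunc ℚ) (m k : ℤ) : RatFunc ℚ :=
  if 0 ≤ k ∧ k ≤ m then
    qPoch q q m.toNat / (qPoch q q k.toNat * qPoch q q (m - k).toNat)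
  else 0

local notation "Q" => (RatFunc.X : RatFunc ℚ)
local notation "P" => qPoch Q Q

lemma Q_ne_zero : Q ≠ 0 := RatFunc.X_ne_zero

lemma one_sub_Q_pow_ne_zero (n : ℕ) : (1 : RatFunc ℚ) - Q ^ (n+1) ≠ 0 := by
  intro h
  have h2 : (Q : RatFunc ℚ) ^ (n+1) = 1 := by linear_combination -h
  rw [← RatFunc.algebraMap_X (K := ℚ), ← map_pow, ← map_one (algebraMap (Polynomial ℚ) (RatFunc ℚ))] at h2
  have h3 : (Polynomial.X : Polynomial ℚ) ^ (n+1) = 1 :=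
    RatFunc.algebraMap_injective ℚ h2
  have := congrArg Polynomial.natDegree h3
  simp [Polynomial.natDegree_X_pow] at this

lemma P_ne_zero (n : ℕ) : P n ≠ 0 := by
  unfold qPoch
  exact Finset.prod_ne_zero_iff.2 fun j _ => by
    have := one_sub_Q_pow_ne_zero j
    rw [pow_succ'] at this
    exact this

lemma P_succ (n : ℕ) : P (n+1) = P n * (1 - Q ^ (n+1)) := by
  unfold qPoch
  rw [Finset.prod_range_succ, pow_succ']

lemma qBinom_neg {m k : ℤ} (h : k < 0) : qBinom Q m k = 0 := by
  unfold qBinom; rw [if_neg]; omega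

lemma qBinom_gt {m k : ℤ} (h : m < k) : qBinom Q m k = 0 := by
  unfold qBinom; rw [if_neg]; omega

lemma qBinom_nat (m k : ℕ) (h : k ≤ m) :
    qBinom Q (m : ℤ) (k : ℤ) = P m / (P k * P (m - k)) := by
  unfold qBinom
  rw [if_pos ⟨Int.natCast_nonneg k, by exact_mod_cast h⟩,
    show ((m : ℤ) - k) = ((m - k : ℕ) : ℤ) by omega]
  simp

lemma qBinom_zero {m : ℤ} (h : 0 ≤ m) : qBinom Q m 0 = 1 := by
  unfold qBinom
  rw [if_pos ⟨le_refl 0, h⟩]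
  rw [show m - 0 = m by ring]
  simp only [Int.toNat_zero, qPoch, Finset.range_zero, Finset.prod_empty, one_mul]
  exact div_self (P_ne_zero m.toNat)

lemma qBinom_self (m : ℕ) : qBinom Q (m : ℤ) (m : ℤ) = 1 := by
  rw [qBinom_nat m m le_rfl]
  simp only [Nat.sub_self, qPoch, Finset.range_zero, Finset.prod_empty, mul_one]
  exact div_self (P_ne_zero m)

lemma pascal (m : ℕ) (k : ℤ) :
    qBinom Q ((m : ℤ) + 1) k = qBinom Q m (k - 1) + Q ^ k * qBinom Q m k := by
  by_cases h0 : k < 0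
  · rw [qBinom_neg h0, qBinom_neg (by omega), qBinom_neg (by omega)]; ring
  by_cases h1 : k = 0
  · subst h1
    rw [qBinom_zero (by omega), qBinom_neg (by omega), qBinom_zero (by omega)]
    simp
  by_cases h2 : (m : ℤ) + 1 < k
  · rw [qBinom_gt h2, qBinom_gt (by omega), qBinom_gt (by omega)]; ring
  by_cases h3 : k = (m : ℤ) + 1
  · subst h3
    rw [show ((m : ℤ) + 1) = ((m + 1 : ℕ) : ℤ) by push_cast; ring, qBinom_self,
      show ((m + 1 : ℕ) : ℤ) - 1 = (m : ℤ) by push_cast; ring, qBinom_self,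
      qBinom_gt (by push_cast; omega)]
    ring
  -- main case 1 ≤ k ≤ m
  obtain ⟨K, rfl⟩ : ∃ K : ℕ, k = (K : ℤ) + 1 := ⟨(k - 1).toNat, by omega⟩
  have hKm : K + 1 ≤ m := by omega
  obtain ⟨j, rfl⟩ : ∃ j : ℕ, m = K + 1 + j := ⟨m - (K + 1), by omega⟩
  rw [show ((K + 1 + j : ℕ) : ℤ) + 1 = ((K + 1 + j + 1 : ℕ) : ℤ) by push_cast; ring,
    show ((K : ℤ) + 1) = ((K + 1 : ℕ) : ℤ) by push_cast; ring,
    show ((K + 1 : ℕ) : ℤ) - 1 = ((K : ℕ) : ℤ) by push_cast; ring,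
    qBinom_nat _ _ (by omega), qBinom_nat _ _ (by omega), qBinom_nat _ _ (by omega),
    show (K + 1 + j + 1) - (K + 1) = j + 1 by omega,
    show (K + 1 + j) - K = j + 1 by omega,
    show (K + 1 + j) - (K + 1) = j by omega,
    zpow_natCast]
  rw [P_succ (K + 1 + j), P_succ K, P_succ j]
  have h4 := P_ne_zero K
  have h5 := P_ne_zero j
  have h6 := one_sub_Q_pow_ne_zero K
  have h7 := one_sub_Q_pow_ne_zero j
  field_simp
  ring

noncomputable def T (a b x y k : ℕ) : RatFunc ℚ :=
  Q ^ (((a:ℤ)-k)*((b:ℤ)-k)) * qBinom Q ((x:ℤ)+y+k) (k:ℤ) *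
    qBinom Q (y:ℤ) ((a:ℤ)-k) * qBinom Q (x:ℤ) ((b:ℤ)-k)

noncomputable def Sf (a b x y : ℕ) : RatFunc ℚ := ∑ k ∈ range (a+b+1), T a b x y k

noncomputable def Rf (a b x y : ℕ) : RatFunc ℚ :=
  qBinom Q ((x:ℤ)+a) (b:ℤ) * qBinom Q ((y:ℤ)+b) (a:ℤ)

lemma T_zero {a b x y k : ℕ} (h : a < k ∨ b < k) : T a b x y k = 0 := by
  rcases h with h | h
  · unfold T; rw [qBinom_neg (by omega : ((a:ℤ)-k) < 0)]; ring
  · unfold T; rw [qBinom_neg (by omega : ((b:ℤ)-k) < 0)]; ring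

lemma sum_T (a b x y N : ℕ) (hN : min a b < N) :
    ∑ k ∈ range N, T a b x y k = Sf a b x y := by
  unfold Sf
  rcases le_total N (a+b+1) with h | h
  · exact Finset.sum_subset (Finset.range_subset_range.2 h)
      (fun k hk hk' => T_zero (by simp only [Finset.mem_range] at hk hk'; omega))
  · exact (Finset.sum_subset (Finset.range_subset_range.2 h)
      (fun k hk hk' => T_zero (by simp only [Finset.mem_range] at hk hk'; omega))).symm

lemma Tsplit (a b x y k : ℕ) :
    T a (b+1) (x+1) y k
      = Q ^ (((a:ℤ)-k)*((b:ℤ)-k)) * Q ^ ((a:ℤ)-k) * qBinom Q ((x:ℤ)+(y+1)+k) (k:ℤ) *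
          qBinom Q (y:ℤ) ((a:ℤ)-k) * qBinom Q (x:ℤ) ((b:ℤ)-k)
        + Q ^ (((a:ℤ)-k)*((b:ℤ)-k)) * Q ^ ((a:ℤ)-k) * Q ^ ((b:ℤ)+1-k) *
          qBinom Q ((x:ℤ)+y+k) ((k:ℤ)-1) *
          qBinom Q (y:ℤ) ((a:ℤ)-k) * qBinom Q (x:ℤ) ((b:ℤ)+1-k)
        + Q ^ ((b:ℤ)+1) * T a (b+1) x y k := by
  have p1 : qBinom Q ((x:ℤ)+1) ((b:ℤ)+1-k)
      = qBinom Q (x:ℤ) ((b:ℤ)-k) + Q ^ ((b:ℤ)+1-k) * qBinom Q (x:ℤ) ((b:ℤ)+1-k) := by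
    have h := pascal x ((b:ℤ)+1-k)
    rw [show ((b:ℤ)+1-k)-1 = (b:ℤ)-k by ring] at h
    exact h
  have p2 : qBinom Q ((x:ℤ)+1+y+k) (k:ℤ)
      = qBinom Q ((x:ℤ)+y+k) ((k:ℤ)-1) + Q ^ (k:ℤ) * qBinom Q ((x:ℤ)+y+k) (k:ℤ) := by
    have h := pascal (x+y+k) (k:ℤ)
    push_cast at h
    rw [show ((x:ℤ)+y+k)+1 = (x:ℤ)+1+y+k by ring] at h
    exact h
  unfold T
  push_cast
  rw [p1, p2]
  rw [show ((a:ℤ)-k)*((b:ℤ)+1-k) = (((a:ℤ)-k)*((b:ℤ)-k) + ((a:ℤ)-k)) by ring,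
    zpow_add₀ Q_ne_zero]
  rw [show ((x:ℤ)+(y+1)+k) = (x:ℤ)+1+y+k by push_cast; ring]
  rw [p2]
  have hQ : ∀ (e f : ℤ), Q ^ (e+f) = Q ^ e * Q ^ f := fun e f => zpow_add₀ Q_ne_zero e f
  rw [show ((b:ℤ)+1) = ((b:ℤ)+1-k) + (k:ℤ) by ring, hQ]
  ring

lemma Tcombine (a b x y k : ℕ) :
    Q ^ (((a:ℤ)-k)*((b:ℤ)-k)) * Q ^ ((a:ℤ)-k) * qBinom Q ((x:ℤ)+(y+1)+k) (k:ℤ) *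
        qBinom Q (y:ℤ) ((a:ℤ)-k) * qBinom Q (x:ℤ) ((b:ℤ)-k)
      + Q ^ (((a:ℤ)-(k+1:ℕ))*((b:ℤ)-(k+1:ℕ))) * Q ^ ((a:ℤ)-(k+1:ℕ)) * Q ^ ((b:ℤ)+1-(k+1:ℕ)) *
        qBinom Q ((x:ℤ)+y+(k+1:ℕ)) (((k+1:ℕ):ℤ)-1) *
        qBinom Q (y:ℤ) ((a:ℤ)-(k+1:ℕ)) * qBinom Q (x:ℤ) ((b:ℤ)+1-(k+1:ℕ))
      = T a b x (y+1) k := by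
  have p3 : qBinom Q ((y:ℤ)+1) ((a:ℤ)-k)
      = qBinom Q (y:ℤ) ((a:ℤ)-k-1) + Q ^ ((a:ℤ)-k) * qBinom Q (y:ℤ) ((a:ℤ)-k) := by
    have h := pascal y ((a:ℤ)-k)
    exact h
  unfold T
  push_cast
  rw [show ((k:ℤ)+1-1) = (k:ℤ) by ring,
    show ((x:ℤ)+y+(k+1)) = (x:ℤ)+(y+1)+k by ring,
    show ((b:ℤ)+1-((k:ℤ)+1)) = (b:ℤ)-k by ring,
    show ((a:ℤ)-((k:ℤ)+1)) = (a:ℤ)-k-1 by ring,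
    show ((b:ℤ)-((k:ℤ)+1)) = (b:ℤ)-k-1 by ring]
  rw [← zpow_add₀ Q_ne_zero (((a:ℤ)-k-1)*((b:ℤ)-k-1)) ((a:ℤ)-k-1),
    ← zpow_add₀ Q_ne_zero ((((a:ℤ)-k-1)*((b:ℤ)-k-1)) + ((a:ℤ)-k-1)) ((b:ℤ)-k),
    show ((((a:ℤ)-k-1)*((b:ℤ)-k-1)) + ((a:ℤ)-k-1)) + ((b:ℤ)-k) = ((a:ℤ)-k)*((b:ℤ)-k) by ring,
    p3]
  ring

lemma Sf_rec (a b x y : ℕ) :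
    Sf a (b+1) (x+1) y = Sf a b x (y+1) + Q ^ ((b:ℤ)+1) * Sf a (b+1) x y := by
  have h1 : Sf a (b+1) (x+1) y = ∑ k ∈ range ((a+b+1)+1), T a (b+1) (x+1) y k := by
    unfold Sf; rw [show a+(b+1)+1 = (a+b+1)+1 by omega]
  have h2 : Sf a (b+1) x y = ∑ k ∈ range ((a+b+1)+1), T a (b+1) x y k := by
    unfold Sf; rw [show a+(b+1)+1 = (a+b+1)+1 by omega]
  rw [h1, h2]
  calc ∑ k ∈ range ((a+b+1)+1), T a (b+1) (x+1) y k
      = ∑ k ∈ range ((a+b+1)+1),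
          (Q ^ (((a:ℤ)-k)*((b:ℤ)-k)) * Q ^ ((a:ℤ)-k) * qBinom Q ((x:ℤ)+(y+1)+k) (k:ℤ) *
            qBinom Q (y:ℤ) ((a:ℤ)-k) * qBinom Q (x:ℤ) ((b:ℤ)-k)
          + Q ^ (((a:ℤ)-k)*((b:ℤ)-k)) * Q ^ ((a:ℤ)-k) * Q ^ ((b:ℤ)+1-k) *
            qBinom Q ((x:ℤ)+y+k) ((k:ℤ)-1) *
            qBinom Q (y:ℤ) ((a:ℤ)-k) * qBinom Q (x:ℤ) ((b:ℤ)+1-k)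
          + Q ^ ((b:ℤ)+1) * T a (b+1) x y k) :=
        Finset.sum_congr rfl fun k _ => Tsplit a b x y k
    _ = (∑ k ∈ range ((a+b+1)+1),
          (Q ^ (((a:ℤ)-k)*((b:ℤ)-k)) * Q ^ ((a:ℤ)-k) * qBinom Q ((x:ℤ)+(y+1)+k) (k:ℤ) *
            qBinom Q (y:ℤ) ((a:ℤ)-k) * qBinom Q (x:ℤ) ((b:ℤ)-k))
        + ∑ k ∈ range ((a+b+1)+1),
          (Q ^ (((a:ℤ)-k)*((b:ℤ)-k)) * Q ^ ((a:ℤ)-k) * Q ^ ((b:ℤ)+1-k) *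
            qBinom Q ((x:ℤ)+y+k) ((k:ℤ)-1) *
            qBinom Q (y:ℤ) ((a:ℤ)-k) * qBinom Q (x:ℤ) ((b:ℤ)+1-k)))
        + Q ^ ((b:ℤ)+1) * ∑ k ∈ range ((a+b+1)+1), T a (b+1) x y k := by
        rw [Finset.sum_add_distrib, Finset.sum_add_distrib, ← Finset.mul_sum]
    _ = Sf a b x (y+1) + Q ^ ((b:ℤ)+1) * ∑ k ∈ range ((a+b+1)+1), T a (b+1) x y k := by
        congr 1
        have hf : ∑ k ∈ range ((a+b+1)+1),
            (Q ^ (((a:ℤ)-k)*((b:ℤ)-k)) * Q ^ ((a:ℤ)-k) * qBinom Q ((x:ℤ)+(y+1)+k) (k:ℤ) *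
              qBinom Q (y:ℤ) ((a:ℤ)-k) * qBinom Q (x:ℤ) ((b:ℤ)-k))
            = ∑ k ∈ range (a+b+1),
            (Q ^ (((a:ℤ)-k)*((b:ℤ)-k)) * Q ^ ((a:ℤ)-k) * qBinom Q ((x:ℤ)+(y+1)+k) (k:ℤ) *
              qBinom Q (y:ℤ) ((a:ℤ)-k) * qBinom Q (x:ℤ) ((b:ℤ)-k)) := by
          rw [Finset.sum_range_succ,
            qBinom_neg (show ((b:ℤ)-(a+b+1:ℕ)) < 0 by push_cast; omega), mul_zero, add_zero]
        have hg : ∑ k ∈ range ((a+b+1)+1),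
            (Q ^ (((a:ℤ)-k)*((b:ℤ)-k)) * Q ^ ((a:ℤ)-k) * Q ^ ((b:ℤ)+1-k) *
              qBinom Q ((x:ℤ)+y+k) ((k:ℤ)-1) *
              qBinom Q (y:ℤ) ((a:ℤ)-k) * qBinom Q (x:ℤ) ((b:ℤ)+1-k))
            = ∑ k ∈ range (a+b+1),
            (Q ^ (((a:ℤ)-(k+1:ℕ))*((b:ℤ)-(k+1:ℕ))) * Q ^ ((a:ℤ)-(k+1:ℕ)) * Q ^ ((b:ℤ)+1-(k+1:ℕ)) *
              qBinom Q ((x:ℤ)+y+(k+1:ℕ)) (((k+1:ℕ):ℤ)-1) *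
              qBinom Q (y:ℤ) ((a:ℤ)-(k+1:ℕ)) * qBinom Q (x:ℤ) ((b:ℤ)+1-(k+1:ℕ))) := by
          rw [Finset.sum_range_succ',
            qBinom_neg (show (((0:ℕ):ℤ)-1) < 0 by norm_num)]
          simp only [mul_zero, zero_mul, add_zero]
        rw [hf, hg, ← Finset.sum_add_distrib]
        exact Finset.sum_congr rfl fun k _ => Tcombine a b x y k

lemma Rf_rec (a b x y : ℕ) :
    Rf a (b+1) (x+1) y = Rf a b x (y+1) + Q ^ ((b:ℤ)+1) * Rf a (b+1) x y := by
  unfold Rf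
  have p := pascal (x+a) ((b:ℤ)+1)
  push_cast at p ⊢
  rw [show ((b:ℤ)+1-1) = (b:ℤ) by ring] at p
  rw [show ((x:ℤ)+1+a) = ((x:ℤ)+a)+1 by ring, p,
    show ((y:ℤ)+1+b) = (y:ℤ)+(b+1) by ring]
  ring

lemma Sf_b0 (a x y : ℕ) : Sf a 0 x y = Rf a 0 x y := by
  unfold Sf Rf
  rw [Finset.sum_eq_single 0]
  · unfold T
    push_cast
    simp only [mul_zero, zpow_zero, one_mul, sub_zero, add_zero]
    rw [qBinom_zero (by positivity : (0:ℤ) ≤ (x:ℤ)+y), qBinom_zero (by positivity : (0:ℤ) ≤ (x:ℤ)),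
      qBinom_zero (by positivity : (0:ℤ) ≤ (x:ℤ)+a)]
    ring
  · intro k _ hk
    exact T_zero (Or.inr (by omega))
  · intro h
    simp at h

lemma tri (a b y : ℕ) :
    qBinom Q ((y:ℤ)+b) (b:ℤ) * qBinom Q (y:ℤ) ((a:ℤ)-b)
      = qBinom Q (a:ℤ) (b:ℤ) * qBinom Q ((y:ℤ)+b) (a:ℤ) := by
  by_cases hba : b ≤ a
  · by_cases hay : a ≤ y + b
    · rw [show ((y:ℤ)+b) = ((y+b:ℕ):ℤ) by push_cast; ring,
        show ((a:ℤ)-b) = ((a-b:ℕ):ℤ) by omega,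
        qBinom_nat (y+b) b (by omega), qBinom_nat y (a-b) (by omega),
        qBinom_nat a b hba, qBinom_nat (y+b) a hay,
        show (y+b)-b = y by omega, show y-(a-b) = (y+b)-a by omega]
      have h1 := P_ne_zero b
      have h2 := P_ne_zero y
      have h3 := P_ne_zero (a-b)
      have h4 := P_ne_zero (y+b-a)
      have h5 := P_ne_zero a
      field_simp
    · rw [qBinom_gt (show ((y:ℤ)+b) < a by push_cast; omega),
        qBinom_gt (show (y:ℤ) < (a:ℤ)-b by push_cast; omega)]
      ring
  · rw [qBinom_gt (show (a:ℤ) < b by push_cast; omega),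
      qBinom_neg (show ((a:ℤ)-b) < 0 by push_cast; omega)]
    ring

lemma Sf_x0 (a b y : ℕ) : Sf a b 0 y = Rf a b 0 y := by
  unfold Sf Rf
  rw [Finset.sum_eq_single b]
  · unfold T
    push_cast
    rw [show ((a:ℤ)-b)*((b:ℤ)-b) = 0 by ring, zpow_zero, one_mul,
      show ((0:ℤ)+y+b) = (y:ℤ)+b by ring, show ((b:ℤ)-b) = (0:ℤ) by ring,
      qBinom_zero (le_refl (0:ℤ)), mul_one, show ((0:ℤ)+a) = (a:ℤ) by ring]
    exact tri a b y
  · intro k _ hk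
    rcases lt_or_gt_of_ne hk with h | h
    · unfold T
      push_cast
      rw [qBinom_gt (show (0:ℤ) < (b:ℤ)-k by omega)]
      ring
    · exact T_zero (Or.inr (by omega))
  · intro h
    simp at h

lemma Sf_eq_Rf : ∀ n a b x y : ℕ, x + b ≤ n → Sf a b x y = Rf a b x y := by
  intro n
  induction n with
  | zero =>
    intro a b x y h
    obtain rfl : b = 0 := by omega
    exact Sf_b0 a x y
  | succ n ih =>
    intro a b x y h
    match x, b with
    | 0, b => exact Sf_x0 a b y
    | x+1, 0 => exact Sf_b0 a (x+1) y
    | x+1, b+1 =>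
      rw [Sf_rec, Rf_rec, ih a b x (y+1) (by omega), ih a (b+1) x y (by omega)]

theorem q_stanley (a b x y : ℕ) :
    ∑ k ∈ Finset.range (min a b + 1),
      (RatFunc.X : RatFunc ℚ) ^ ((a - k) * (b - k)) *
        qBinom RatFunc.X ((x : ℤ) + y + k) (k : ℤ) *
        qBinom RatFunc.X (y : ℤ) ((a : ℤ) - k) *
        qBinom RatFunc.X (x : ℤ) ((b : ℤ) - k)
    = qBinom RatFunc.X ((x : ℤ) + a) (b : ℤ) * qBinom RatFunc.X ((y : ℤ) + b) (a : ℤ) := by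
  have h1 : ∑ k ∈ Finset.range (min a b + 1),
      (RatFunc.X : RatFunc ℚ) ^ ((a - k) * (b - k)) *
        qBinom RatFunc.X ((x : ℤ) + y + k) (k : ℤ) *
        qBinom RatFunc.X (y : ℤ) ((a : ℤ) - k) *
        qBinom RatFunc.X (x : ℤ) ((b : ℤ) - k)
      = ∑ k ∈ Finset.range (min a b + 1), T a b x y k := by
    refine Finset.sum_congr rfl fun k hk => ?_
    simp only [Finset.mem_range] at hk
    have hka : k ≤ a := by omega
    have hkb : k ≤ b := by omega
    unfold T
    rw [show (((a:ℤ)-k)*((b:ℤ)-k)) = (((a-k)*(b-k) : ℕ) : ℤ) by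
      push_cast [Nat.cast_sub hka, Nat.cast_sub hkb]; ring]
    rw [zpow_natCast]
  rw [h1, sum_T a b x y _ (by omega), Sf_eq_Rf (x+b) a b x y le_rfl]
  rfl
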